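/- arXiv:2110.14174 — 2 statements merged into one kernel-verified Lean document; each statement's English description precedes it below -/
import Mathlib

section
/- If ω₁ = ⋯ = ω_N = ω_s, then the transfer function G[s] = 1 + C(sI - A)⁻¹B equals ((√N·Γ̄)² + (s + iω_s)(s + iω_r - κ/2)) / ((√N·Γ̄)² + (s + iω_s)(s + iω_r + κ/2)), where Γ̄ = √((1/N)∑_{k=1}^N Γ_k²). -/
open Matrix Complex

/-- The system matrix A of the Tavis-Cummings linear model, indexed by `Fin N ⊕ Unit`. -/
noncomputable def TCmatA (N : ℕ) (κ ωr : ℝ) (ω Γ : Fin N → ℝ) :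
    Matrix (Fin N ⊕ Unit) (Fin N ⊕ Unit) ℂ :=
  Matrix.of fun i j =>
    match i, j with
    | Sum.inl a, Sum.inl b => if a = b then -Complex.I * (ω a : ℂ) else 0
    | Sum.inl a, Sum.inr _ => -Complex.I * (Γ a : ℂ)
    | Sum.inr _, Sum.inl b => -Complex.I * (Γ b : ℂ)
    | Sum.inr _, Sum.inr _ => -Complex.I * (ωr : ℂ) - (κ : ℂ) / 2

/-- The input matrix B as a column vector: last entry `-√κ`, others `0`. -/
noncomputable def TCcolB (N : ℕ) (κ : ℝ) : Matrix (Fin N ⊕ Unit) Unit ℂ :=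
  Matrix.of fun i _ => Sum.elim (fun _ => (0 : ℂ)) (fun _ => -(Real.sqrt κ : ℂ)) i

/-- In the resonant case `ω₁ = ⋯ = ω_N = ω_s`, the transfer function
`G[s] = 1 + C(sI - A)⁻¹B` equals
`((√N·Γ̄)² + (s + iω_s)(s + iω_r - κ/2)) / ((√N·Γ̄)² + (s + iω_s)(s + iω_r + κ/2))`,
where `Γ̄ = √((1/N)∑ Γ_k²)`. -/
theorem stmt_2 (N : ℕ) (hN : 1 ≤ N) (κ : ℝ) (hκ : 0 < κ) (ωs ωr : ℝ)
    (Γ : Fin N → ℝ) (s : ℂ)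
    (hs : IsUnit (s • (1 : Matrix (Fin N ⊕ Unit) (Fin N ⊕ Unit) ℂ)
        - TCmatA N κ ωr (fun _ => ωs) Γ).det) :
    ((1 : ℂ) + ((-(TCcolB N κ)ᵀ) *
        (s • (1 : Matrix (Fin N ⊕ Unit) (Fin N ⊕ Unit) ℂ)
          - TCmatA N κ ωr (fun _ => ωs) Γ)⁻¹ * TCcolB N κ) () ())
    = (((Real.sqrt N * Real.sqrt ((1 / N) * ∑ k, Γ k ^ 2) : ℝ) : ℂ) ^ 2
          + (s + Complex.I * (ωs : ℂ)) * (s + Complex.I * (ωr : ℂ) - (κ : ℂ) / 2))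
      / (((Real.sqrt N * Real.sqrt ((1 / N) * ∑ k, Γ k ^ 2) : ℝ) : ℂ) ^ 2
          + (s + Complex.I * (ωs : ℂ)) * (s + Complex.I * (ωr : ℂ) + (κ : ℂ) / 2)) := by
  have hN0 : (N : ℝ) ≠ 0 := Nat.cast_ne_zero.mpr (by omega)
  set α : ℂ := s + Complex.I * (ωs : ℂ) with hαdef
  set M : Matrix (Fin N ⊕ Unit) (Fin N ⊕ Unit) ℂ :=
    s • (1 : Matrix (Fin N ⊕ Unit) (Fin N ⊕ Unit) ℂ) - TCmatA N κ ωr (fun _ => ωs) Γ with hMdef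
  have hdet : M.det ≠ 0 := hs.ne_zero
  set D : ℂ := (∑ k, ((Γ k : ℂ)) ^ 2) + α * (s + Complex.I * (ωr : ℂ) + (κ : ℂ) / 2) with hDdef
  have hM1 : ∀ a b : Fin N, M (Sum.inl a) (Sum.inl b) = if a = b then α else 0 := by
    intro a b
    by_cases h : a = b <;>
      simp [hMdef, hαdef, TCmatA, Matrix.sub_apply, Matrix.smul_apply, Matrix.one_apply, h] <;> ring
  have hM2 : ∀ (a : Fin N) (u : Unit), M (Sum.inl a) (Sum.inr u) = Complex.I * Γ a := by
    intro a u
    simp [hMdef, TCmatA, Matrix.sub_apply, Matrix.smul_apply, Matrix.one_apply]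
  have hM3 : ∀ (b : Fin N) (u : Unit), M (Sum.inr u) (Sum.inl b) = Complex.I * Γ b := by
    intro b u
    simp [hMdef, TCmatA, Matrix.sub_apply, Matrix.smul_apply, Matrix.one_apply]
  have hM4 : ∀ u v : Unit, M (Sum.inr u) (Sum.inr v) =
      s + Complex.I * (ωr : ℂ) + (κ : ℂ) / 2 := by
    intro u v
    simp [hMdef, TCmatA, Matrix.sub_apply, Matrix.smul_apply, Matrix.one_apply]
    ring
  have hsumI : ∑ b : Fin N, Complex.I * (Γ b : ℂ) * (Complex.I * (Γ b : ℂ))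
      = -(∑ k, ((Γ k : ℂ)) ^ 2) := by
    rw [← Finset.sum_neg_distrib]
    refine Finset.sum_congr rfl fun b _ => ?_
    rw [show Complex.I * (Γ b : ℂ) * (Complex.I * (Γ b : ℂ))
        = Complex.I * Complex.I * ((Γ b : ℂ) ^ 2) by ring, Complex.I_mul_I]
    ring
  have hD : D ≠ 0 := by
    intro h0
    apply hdet
    by_cases hα0 : α = 0
    · have hS : (∑ k, Γ k ^ 2 : ℝ) = 0 := by
        have h1 := h0
        rw [hDdef, hα0, zero_mul, add_zero] at h1
        have h2 : ((∑ k, Γ k ^ 2 : ℝ) : ℂ) = 0 := by push_cast; exact h1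
        exact_mod_cast h2
      have hΓ : ∀ k, Γ k = 0 := by
        intro k
        have h1 := (Finset.sum_eq_zero_iff_of_nonneg
          (fun i _ => sq_nonneg (Γ i))).mp hS k (Finset.mem_univ k)
        exact pow_eq_zero_iff two_ne_zero |>.mp h1
      apply Matrix.det_eq_zero_of_row_eq_zero (Sum.inl ⟨0, by omega⟩)
      intro j
      match j with
      | Sum.inl b =>
        rw [hM1]
        split_ifs with h
        · exact hα0
        · rfl
      | Sum.inr u =>
        rw [hM2]
        simp [hΓ]
    · rw [← Matrix.exists_mulVec_eq_zero_iff]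
      refine ⟨Sum.elim (fun j => Complex.I * (Γ j : ℂ)) (fun _ => -α), ?_, ?_⟩
      · intro h
        apply hα0
        have h1 := congrFun h (Sum.inr ())
        simpa using h1
      · funext i
        match i with
        | Sum.inl a =>
          simp only [Matrix.mulVec, dotProduct, Fintype.sum_sum_type, hM1, hM2,
            Sum.elim_inl, Sum.elim_inr, Finset.univ_unique, Finset.sum_singleton,
            ite_mul, zero_mul, Finset.sum_ite_eq, Finset.mem_univ, if_true, Pi.zero_apply]
          ring
        | Sum.inr u =>
          simp only [Matrix.mulVec, dotProduct, Fintype.sum_sum_type, hM3, hM4,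
            Sum.elim_inl, Sum.elim_inr, Finset.univ_unique, Finset.sum_singleton, Pi.zero_apply]
          rw [hsumI]
          linear_combination -h0
  -- the solution vector
  set V : Matrix (Fin N ⊕ Unit) Unit ℂ :=
    Matrix.of fun i _ => Sum.elim (fun j => Complex.I * (Γ j : ℂ) * (Real.sqrt κ : ℂ) / D)
      (fun _ => -(Real.sqrt κ : ℂ) * α / D) i with hVdef
  have hMV : M * V = TCcolB N κ := by
    ext i j
    match i, j with
    | Sum.inl a, () =>
      simp only [Matrix.mul_apply, Fintype.sum_sum_type, hM1, hM2, hVdef, Matrix.of_apply,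
        Sum.elim_inl, Sum.elim_inr, Finset.univ_unique, Finset.sum_singleton,
        ite_mul, zero_mul, Finset.sum_ite_eq, Finset.mem_univ, if_true, TCcolB]
      ring
    | Sum.inr u, () =>
      simp only [Matrix.mul_apply, Fintype.sum_sum_type, hM3, hM4, hVdef, Matrix.of_apply,
        Sum.elim_inl, Sum.elim_inr, Finset.univ_unique, Finset.sum_singleton, TCcolB]
      have hrw : ∀ b : Fin N, Complex.I * (Γ b : ℂ) * (Complex.I * (Γ b : ℂ) * (Real.sqrt κ : ℂ) / D)
          = (Complex.I * (Γ b : ℂ) * (Complex.I * (Γ b : ℂ))) * ((Real.sqrt κ : ℂ) / D) := by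
        intro b; ring
      simp only [hrw, ← Finset.sum_mul, hsumI]
      field_simp
      linear_combination (-(Real.sqrt κ : ℂ)) * hDdef
  have hV : M⁻¹ * TCcolB N κ = V := by
    rw [← hMV, ← Matrix.mul_assoc, Matrix.nonsing_inv_mul M hs, Matrix.one_mul]
  have hE : ((-(TCcolB N κ)ᵀ) * M⁻¹ * TCcolB N κ) () () = -(κ : ℂ) * α / D := by
    rw [Matrix.mul_assoc, hV]
    simp only [Matrix.mul_apply, Fintype.sum_sum_type, Matrix.neg_apply, Matrix.transpose_apply,
      TCcolB, Matrix.of_apply, Sum.elim_inl, Sum.elim_inr, hVdef,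
      Finset.univ_unique, Finset.sum_singleton, neg_zero, zero_mul, Finset.sum_const_zero, zero_add]
    have : ((Real.sqrt κ : ℝ) : ℂ) * ((Real.sqrt κ : ℝ) : ℂ) = (κ : ℂ) := by
      rw [← Complex.ofReal_mul, Real.mul_self_sqrt hκ.le]
    linear_combination (-α / D) * this
  have hsq : (((Real.sqrt N * Real.sqrt ((1 / N) * ∑ k, Γ k ^ 2) : ℝ) : ℂ)) ^ 2
      = (∑ k, ((Γ k : ℂ)) ^ 2) := by
    have hx : (0:ℝ) ≤ (1 / N) * ∑ k, Γ k ^ 2 := by positivity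
    have hr : (Real.sqrt N * Real.sqrt ((1 / N) * ∑ k, Γ k ^ 2)) ^ 2
        = ∑ k, Γ k ^ 2 := by
      rw [mul_pow, Real.sq_sqrt (by positivity), Real.sq_sqrt hx]
      field_simp
    rw [← Complex.ofReal_pow, hr]
    push_cast
    rfl
  rw [hE, hsq, ← hDdef]
  field_simp
  ring
end

section
/- For the 2×2 matrix Â_co = -[[iω_s, i√N·Γ̄],[i√N·Γ̄, iω_r + κ/2]] with κ > 0 and Γ̄ > 0, every eigenvalue has strictly negative real part (Hurwitz stability of the controllable-observable subsystem). -/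
open Matrix Complex

/-- Hurwitz stability of the controllable-observable subsystem of the resonant
Tavis-Cummings model: every eigenvalue of
`Â_co = [[-iω_s, -i√N·Γ̄], [-i√N·Γ̄, -iω_r - κ/2]]` has strictly negative real part. -/
theorem stmt_6 (κ : ℝ) (hκ : 0 < κ) (N : ℕ) (hN : 1 ≤ N) (Γbar : ℝ) (hΓ : 0 < Γbar)
    (ωs ωr : ℝ) (lam : ℂ) (x : Fin 2 → ℂ) (hx : x ≠ 0)
    (heig : (!![-Complex.I * (ωs : ℂ), -Complex.I * ((Real.sqrt N * Γbar : ℝ) : ℂ);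
        -Complex.I * ((Real.sqrt N * Γbar : ℝ) : ℂ),
        -Complex.I * (ωr : ℂ) - (κ : ℂ) / 2]).mulVec x = lam • x) :
    lam.re < 0 := by
  set g : ℝ := Real.sqrt N * Γbar with hgdef
  have hg : 0 < g := by
    apply mul_pos _ hΓ
    apply Real.sqrt_pos.2
    exact_mod_cast Nat.lt_of_lt_of_le Nat.zero_lt_one hN
  have h0 := congrFun heig 0
  have h1 := congrFun heig 1
  simp [Matrix.mulVec, dotProduct, Fin.sum_univ_two, Complex.ext_iff] at h0 h1
  obtain ⟨h0re, h0im⟩ := h0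
  obtain ⟨h1re, h1im⟩ := h1
  set a := (x 0).re
  set b := (x 0).im
  set c := (x 1).re
  set d := (x 1).im
  set p := lam.re
  set q := lam.im
  have key : -κ/2 * (c^2 + d^2) = p * (a^2 + b^2 + c^2 + d^2) := by
    linear_combination a * h0re + b * h0im + c * h1re + d * h1im
  have hcomp : a ≠ 0 ∨ b ≠ 0 ∨ c ≠ 0 ∨ d ≠ 0 := by
    by_contra hcon
    push_neg at hcon
    obtain ⟨ha, hb, hc, hd⟩ := hcon
    apply hx
    funext i
    fin_cases i <;> apply Complex.ext <;> simpa
  have hcd : 0 < c^2 + d^2 := by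
    rcases eq_or_ne c 0 with hc | hc
    · rcases eq_or_ne d 0 with hd | hd
      · exfalso
        have hb : b = 0 := by
          have := h1re
          rw [hc, hd] at this
          nlinarith
        have ha : a = 0 := by
          have := h1im
          rw [hc, hd] at this
          nlinarith
        rcases hcomp with h | h | h | h <;> exact h (by assumption)
      · positivity
    · positivity
  nlinarith [sq_nonneg a, sq_nonneg b, mul_pos hκ hcd]
end
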